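/- Let g be a positive-definite symmetric m×m matrix, y ≠ 0, y_i = g_ij y^j, τ = y_i y^i, β > 0. Define G^a_j = (1/β)δ^a_j + ((β−1)/(βτ)) y^a y_j and H^a_j = β δ^a_j + ((1−β)/τ) y^a y_j. Then H^a_b G^b_j applied in the structural subspace gives: the endomorphism Ψ̄ of V = H ⊕ W defined by Ψ̄(δ_i) = −G^a_i ∂_a, Ψ̄(∂_i) = H^a_i δ_a satisfies Ψ̄(h_i) = −(1/β) v_i and Ψ̄(v_i) = β h_i, where h_i = δ_i − (y_i/τ) y^j δ_j and v_i = ∂_i − (y_i/τ) y^j ∂_j; consequently Ψ̄² = −id on D = span{h_i, v_i}. -/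

import Mathlib

/-- STATEMENT 17: the β-deformed almost complex structure Ψ̄ satisfies
Ψ̄(h_i) = −(1/β) v_i, Ψ̄(v_i) = β h_i, hence Ψ̄² = −id on D = span{h_i, v_i}. -/
theorem deformed_psi_on_structural_subspace {m : ℕ}
    (g : Matrix (Fin m) (Fin m) ℝ) (hg : g.PosDef)
    (y : Fin m → ℝ) (hy : y ≠ 0)
    (β : ℝ) (hβ : 0 < β)
    (yl : Fin m → ℝ) (hyl : ∀ i, yl i = ∑ j, g i j * y j)
    (τ : ℝ) (hτ : τ = ∑ i, yl i * y i)
    (Gm Hm : Matrix (Fin m) (Fin m) ℝ)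
    (hGm : ∀ a j, Gm a j = (1 / β) * (if a = j then 1 else 0)
      + ((β - 1) / (β * τ)) * y a * yl j)
    (hHm : ∀ a j, Hm a j = β * (if a = j then 1 else 0)
      + ((1 - β) / τ) * y a * yl j)
    (Ψb : (Fin m → ℝ) × (Fin m → ℝ) → (Fin m → ℝ) × (Fin m → ℝ))
    (hΨb : ∀ X, Ψb X = (fun a => ∑ i, Hm a i * X.2 i, fun a => -∑ i, Gm a i * X.1 i))
    (hvec vvec : Fin m → (Fin m → ℝ) × (Fin m → ℝ))
    (hh : ∀ i, hvec i = (Pi.single i 1 - (yl i / τ) • y, 0))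
    (hv : ∀ i, vvec i = (0, Pi.single i 1 - (yl i / τ) • y)) :
    (∀ i, Ψb (hvec i) = -(1 / β) • vvec i) ∧
    (∀ i, Ψb (vvec i) = β • hvec i) ∧
    (∀ X ∈ Submodule.span ℝ (Set.range hvec ∪ Set.range vvec), Ψb (Ψb X) = -X) := by
  have hβ' : β ≠ 0 := ne_of_gt hβ
  -- τ > 0
  have hτpos : 0 < τ := by
    have h := hg.dotProduct_mulVec_pos hy
    have : τ = dotProduct (star y) (g.mulVec y) := by
      simp only [hτ, dotProduct, Matrix.mulVec, dotProduct,
        star_trivial]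
      refine Finset.sum_congr rfl fun i _ => ?_
      rw [hyl, mul_comm]
    rw [this]; exact h
  have hτ' : τ ≠ 0 := ne_of_gt hτpos
  set w : Fin m → (Fin m → ℝ) := fun i => Pi.single i 1 - (yl i / τ) • y with hw
  -- key orthogonality
  have key : ∀ i, ∑ j, yl j * w i j = 0 := by
    intro i
    have h1 : ∑ j, yl j * (Pi.single i 1 : Fin m → ℝ) j = yl i := by
      rw [Finset.sum_eq_single i]
      · simp
      · intro b _ hb; simp [Pi.single_eq_of_ne hb]
      · simp
    have h2 : ∑ j, yl j * ((yl i / τ) * y j) = yl i := by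
      have : ∑ j, yl j * ((yl i / τ) * y j) = (yl i / τ) * ∑ j, yl j * y j := by
        rw [Finset.mul_sum]; refine Finset.sum_congr rfl fun j _ => by ring
      rw [this, ← hτ]
      field_simp
    simp only [hw, Pi.sub_apply, Pi.smul_apply, smul_eq_mul, mul_sub]
    rw [Finset.sum_sub_distrib, h1, h2, sub_self]
  have hGw : ∀ i a, ∑ j, Gm a j * w i j = (1 / β) * w i a := by
    intro i a
    have : ∀ j, Gm a j * w i j
        = (1 / β) * ((if a = j then 1 else 0) * w i j)
          + ((β - 1) / (β * τ)) * y a * (yl j * w i j) := by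
      intro j; rw [hGm]; ring
    simp only [this]
    rw [Finset.sum_add_distrib, ← Finset.mul_sum, ← Finset.mul_sum, key,
      mul_zero, add_zero]
    congr 1
    rw [Finset.sum_eq_single a] <;> simp (config := {contextual := true}) [eq_comm]
  have hHw : ∀ i a, ∑ j, Hm a j * w i j = β * w i a := by
    intro i a
    have : ∀ j, Hm a j * w i j
        = β * ((if a = j then 1 else 0) * w i j)
          + ((1 - β) / τ) * y a * (yl j * w i j) := by
      intro j; rw [hHm]; ring
    simp only [this]
    rw [Finset.sum_add_distrib, ← Finset.mul_sum, ← Finset.mul_sum, key,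
      mul_zero, add_zero]
    congr 1
    rw [Finset.sum_eq_single a] <;> simp (config := {contextual := true}) [eq_comm]
  have P1 : ∀ i, Ψb (hvec i) = -(1 / β) • vvec i := by
    intro i
    have h2 := hGw i
    simp only [hw] at h2
    rw [hΨb, hh i, hv i]
    simp only [Prod.smul_mk, Prod.mk.injEq]
    constructor
    · funext a; simp
    · funext a
      rw [h2 a]
      simp only [Pi.smul_apply, smul_eq_mul, neg_mul, Pi.sub_apply]
  have P2 : ∀ i, Ψb (vvec i) = β • hvec i := by
    intro i
    have h2 := hHw i
    simp only [hw] at h2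
    rw [hΨb, hv i, hh i]
    simp only [Prod.smul_mk, Prod.mk.injEq]
    constructor
    · funext a
      rw [h2 a]
      simp only [Pi.smul_apply, smul_eq_mul, Pi.sub_apply]
    · funext a; simp
  refine ⟨P1, P2, ?_⟩
  -- linearity of Ψb
  have hadd : ∀ X Y, Ψb (X + Y) = Ψb X + Ψb Y := by
    intro X Y
    simp only [hΨb, Prod.mk_add_mk, Prod.fst_add, Prod.snd_add, Prod.mk.injEq]
    constructor <;> funext a <;>
      simp only [Pi.add_apply, mul_add, Finset.sum_add_distrib, neg_add]
  have hsmul : ∀ (c : ℝ) X, Ψb (c • X) = c • Ψb X := by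
    intro c X
    simp only [hΨb, Prod.smul_mk, Prod.smul_fst, Prod.smul_snd, Prod.mk.injEq]
    constructor <;> funext a <;>
      simp only [Pi.smul_apply, smul_eq_mul, Finset.mul_sum, mul_neg, neg_inj] <;>
      exact Finset.sum_congr rfl fun j _ => by ring
  have hzero : Ψb 0 = 0 := by
    have := hsmul 0 0; simpa using this
  intro X hX
  induction hX using Submodule.span_induction with
  | mem x hx =>
    rcases hx with ⟨i, rfl⟩ | ⟨i, rfl⟩
    · rw [P1 i, hsmul, P2 i, smul_smul]
      have : -(1 / β) * β = -1 := by field_simp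
      rw [this, neg_one_smul]
    · rw [P2 i, hsmul, P1 i, smul_smul]
      have : β * -(1 / β) = -1 := by field_simp
      rw [this, neg_one_smul]
  | zero => simp [hzero]
  | add x y hx hy ihx ihy => rw [hadd, hadd, ihx, ihy, neg_add]
  | smul c x hx ih => rw [hsmul, hsmul, ih, smul_neg]
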